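/- Let m ≥ 1 and let sX, sY, t : Fin m → ℕ be positive with Σ_i t i = Σ_i sX i + Σ_i sY i. If the NMTS instance (sX, sY, t) has a solution (bijections α, β : Fin m ≃ Fin m with sX(α i) + sY(β i) = t i for all i), then the constructed two-machine job shop instance admits a feasible no-idle/no-wait schedule with makespan exactly L + 1, where L = 2m + 3mP + Σ_i t i and P = Σ_i t i + Σ_i sX i + Σ_i sY i. -/

import Mathlib

/-- M1 processing times of the constructed instance: x-jobs (`j < m`) and y-jobs
(`m ≤ j < 2m`) take time 1, the t-job of index `i` takes time `t i + 3P`. -/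
def jsA (m : ℕ) (t : Fin m → ℕ) (P : ℕ) : Fin (3 * m) → ℕ := fun j =>
  if _ : (j : ℕ) < 2 * m then 1 else t ⟨(j : ℕ) - 2 * m, by omega⟩ + 3 * P

/-- M2 processing times of the constructed instance: the x-job of index `i` takes
time `sX i + P`, the y-job of index `i` takes `sY i + 2P`, t-jobs take time 2. -/
def jsB (m : ℕ) (sX sY : Fin m → ℕ) (P : ℕ) : Fin (3 * m) → ℕ := fun j =>
  if h1 : (j : ℕ) < m then sX ⟨(j : ℕ), h1⟩ + P
  else if _ : (j : ℕ) < 2 * m then sY ⟨(j : ℕ) - m, by omega⟩ + 2 * P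
  else 2

/-- Routes: x-jobs and t-jobs go M1→M2 (`true`), y-jobs go M2→M1 (`false`). -/
def jsRoute (m : ℕ) : Fin (3 * m) → Bool := fun j =>
  decide ((j : ℕ) < m ∨ 2 * m ≤ (j : ℕ))

/-- Start time of job `j` on a machine with processing times `c`, processing order
`π` and machine start time `s`: the machine works contiguously (no idle time). -/
def startTime (N : ℕ) (c : Fin N → ℕ) (π : Fin N ≃ Fin N) (s : ℕ) (j : Fin N) : ℕ :=
  s + ∑ l ∈ Finset.univ.filter (fun l : Fin N => l < π.symm j), c (π l)

/-- A no-idle/no-wait two-machine job shop schedule: each machine processes all jobs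
contiguously in orders `π1`, `π2` from start times `s1`, `s2`, and each job's second
operation (according to its route) starts exactly when its first one completes. -/
def JSSchedule (N : ℕ) (a b : Fin N → ℕ) (route : Fin N → Bool)
    (π1 π2 : Fin N ≃ Fin N) (s1 s2 : ℕ) : Prop :=
  ∀ j : Fin N,
    if route j then startTime N b π2 s2 j = startTime N a π1 s1 j + a j
    else startTime N a π1 s1 j = startTime N b π2 s2 j + b j



/-- if the NMTS instance `(sX, sY, t)` has a solution, the constructed
two-machine job shop instance has a feasible no-idle/no-wait schedule with makespan
exactly `L + 1`. -/


def xjob {m : ℕ} (i : Fin m) : Fin (3*m) := ⟨i, by have := i.2; omega⟩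
def yjob {m : ℕ} (i : Fin m) : Fin (3*m) := ⟨m + i, by have := i.2; omega⟩
def tjob {m : ℕ} (i : Fin m) : Fin (3*m) := ⟨2*m + i, by have := i.2; omega⟩

def f1 (m : ℕ) (α β : Fin m ≃ Fin m) : Fin (3*m) → Fin (3*m) := fun p =>
  if (p:ℕ) % 3 = 0 then xjob (α ⟨(p:ℕ)/3, by have := p.2; omega⟩)
  else if (p:ℕ) % 3 = 1 then tjob (⟨(p:ℕ)/3, by have := p.2; omega⟩ : Fin m)
  else yjob (β ⟨(p:ℕ)/3, by have := p.2; omega⟩)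

def g1 (m : ℕ) (α β : Fin m ≃ Fin m) : Fin (3*m) → Fin (3*m) := fun j =>
  if h : (j:ℕ) < m then ⟨3 * (α.symm ⟨j, h⟩ : ℕ), by have := (α.symm ⟨(j:ℕ), h⟩).2; omega⟩
  else if h2 : (j:ℕ) < 2*m then
    ⟨3 * (β.symm ⟨(j:ℕ) - m, by omega⟩ : ℕ) + 2, by have := (β.symm ⟨(j:ℕ)-m, by omega⟩).2; omega⟩
  else ⟨3 * ((j:ℕ) - 2*m) + 1, by have := j.2; omega⟩

lemma g1_f1 (m : ℕ) (α β : Fin m ≃ Fin m) : Function.LeftInverse (g1 m α β) (f1 m α β) := by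
  intro p
  have hp := p.2
  have h3 : (p:ℕ) % 3 = 0 ∨ (p:ℕ) % 3 = 1 ∨ (p:ℕ) % 3 = 2 := by omega
  rcases h3 with hr | hr | hr
  · have hlt := (α ⟨(p:ℕ)/3, by omega⟩).2
    simp only [f1, g1, hr, if_pos, xjob, dif_pos hlt]
    apply Fin.ext
    simp only [Fin.eta, Equiv.symm_apply_apply]
    omega
  · have hk : (p:ℕ)/3 < m := by omega
    simp only [f1, g1, hr, tjob]
    norm_num
    apply Fin.ext
    simp only [dif_neg (by omega : ¬ (2*m + (p:ℕ)/3 < m)),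
      dif_neg (by omega : ¬ (2*m + (p:ℕ)/3 < 2*m))]
    omega
  · have hlt := (β ⟨(p:ℕ)/3, by omega⟩).2
    simp only [f1, g1, hr, yjob]
    norm_num
    simp only [dif_neg (show ¬ (m + ((β ⟨(p:ℕ)/3, by omega⟩ : Fin m)):ℕ) < m by omega),
      dif_pos (show (m + ((β ⟨(p:ℕ)/3, by omega⟩ : Fin m)):ℕ) < 2*m by omega)]
    apply Fin.ext
    simp only [Nat.add_sub_cancel_left, Fin.eta, Equiv.symm_apply_apply]
    omega

def f2 (m : ℕ) (α β : Fin m ≃ Fin m) : Fin (3*m) → Fin (3*m) := fun p =>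
  if (p:ℕ) % 3 = 0 then xjob (α ⟨(p:ℕ)/3, by have := p.2; omega⟩)
  else if (p:ℕ) % 3 = 1 then yjob (β ⟨(p:ℕ)/3, by have := p.2; omega⟩)
  else tjob (⟨(p:ℕ)/3, by have := p.2; omega⟩ : Fin m)

def g2 (m : ℕ) (α β : Fin m ≃ Fin m) : Fin (3*m) → Fin (3*m) := fun j =>
  if h : (j:ℕ) < m then ⟨3 * (α.symm ⟨j, h⟩ : ℕ), by have := (α.symm ⟨(j:ℕ), h⟩).2; omega⟩
  else if h2 : (j:ℕ) < 2*m then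
    ⟨3 * (β.symm ⟨(j:ℕ) - m, by omega⟩ : ℕ) + 1, by have := (β.symm ⟨(j:ℕ)-m, by omega⟩).2; omega⟩
  else ⟨3 * ((j:ℕ) - 2*m) + 2, by have := j.2; omega⟩

lemma g2_f2 (m : ℕ) (α β : Fin m ≃ Fin m) : Function.LeftInverse (g2 m α β) (f2 m α β) := by
  intro p
  have hp := p.2
  have h3 : (p:ℕ) % 3 = 0 ∨ (p:ℕ) % 3 = 1 ∨ (p:ℕ) % 3 = 2 := by omega
  rcases h3 with hr | hr | hr
  · have hlt := (α ⟨(p:ℕ)/3, by omega⟩).2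
    simp only [f2, g2, hr, if_pos, xjob, dif_pos hlt]
    apply Fin.ext
    simp only [Fin.eta, Equiv.symm_apply_apply]
    omega
  · have hlt := (β ⟨(p:ℕ)/3, by omega⟩).2
    simp only [f2, g2, hr, yjob]
    norm_num
    simp only [dif_neg (show ¬ (m + ((β ⟨(p:ℕ)/3, by omega⟩ : Fin m)):ℕ) < m by omega),
      dif_pos (show (m + ((β ⟨(p:ℕ)/3, by omega⟩ : Fin m)):ℕ) < 2*m by omega)]
    apply Fin.ext
    simp only [Nat.add_sub_cancel_left, Fin.eta, Equiv.symm_apply_apply]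
    omega
  · have hk : (p:ℕ)/3 < m := by omega
    simp only [f2, g2, hr, tjob]
    norm_num
    apply Fin.ext
    simp only [dif_neg (by omega : ¬ (2*m + (p:ℕ)/3 < m)),
      dif_neg (by omega : ¬ (2*m + (p:ℕ)/3 < 2*m))]
    omega

noncomputable def perm1 (m : ℕ) (α β : Fin m ≃ Fin m) : Fin (3*m) ≃ Fin (3*m) :=
  Equiv.ofBijective (f1 m α β)
    (Finite.injective_iff_bijective.mp (g1_f1 m α β).injective)

noncomputable def perm2 (m : ℕ) (α β : Fin m ≃ Fin m) : Fin (3*m) ≃ Fin (3*m) :=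
  Equiv.ofBijective (f2 m α β)
    (Finite.injective_iff_bijective.mp (g2_f2 m α β).injective)

@[simp] lemma perm1_apply (m : ℕ) (α β : Fin m ≃ Fin m) (p : Fin (3*m)) :
    perm1 m α β p = f1 m α β p := rfl

@[simp] lemma perm2_apply (m : ℕ) (α β : Fin m ≃ Fin m) (p : Fin (3*m)) :
    perm2 m α β p = f2 m α β p := rfl

lemma filter_lt_succ (N q : ℕ) (h : q < N) :
    (Finset.univ.filter (fun l : Fin N => (l:ℕ) < q + 1)) =
      insert ⟨q, h⟩ (Finset.univ.filter (fun l : Fin N => (l:ℕ) < q)) := by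
  ext l
  simp only [Finset.mem_filter, Finset.mem_insert, Finset.mem_univ, true_and, Fin.ext_iff]
  omega

lemma startTime_eq {N : ℕ} (c : Fin N → ℕ) (π : Fin N ≃ Fin N) (s : ℕ)
    (st : Fin N → ℕ)
    (h0 : ∀ h : 0 < N, st (π ⟨0, h⟩) = s)
    (hstep : ∀ (p : ℕ) (h : p + 1 < N),
      st (π ⟨p+1, h⟩) = st (π ⟨p, by omega⟩) + c (π ⟨p, by omega⟩))
    (j : Fin N) : startTime N c π s j = st j := by
  have key : ∀ (q : ℕ) (h : q < N),
      s + ∑ l ∈ Finset.univ.filter (fun l : Fin N => (l:ℕ) < q), c (π l)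
        = st (π ⟨q, h⟩) := by
    intro q
    induction q with
    | zero =>
      intro h
      have he : (Finset.univ.filter (fun l : Fin N => (l:ℕ) < 0)) = (∅ : Finset (Fin N)) := by
        ext l; simp
      rw [he]
      simpa using (h0 h).symm
    | succ q ih =>
      intro h
      rw [filter_lt_succ N q (by omega), Finset.sum_insert (by simp)]
      rw [hstep q h, ← ih (by omega)]
      ring
  have hq := key (π.symm j) (π.symm j).2
  simp only [Fin.eta, Equiv.apply_symm_apply] at hq
  exact hq

def tN (m : ℕ) (t : Fin m → ℕ) (j : ℕ) : ℕ := if h : j < m then t ⟨j, h⟩ else 0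

@[simp] lemma tN_fin (m : ℕ) (t : Fin m → ℕ) (i : Fin m) : tN m t (i:ℕ) = t i := by
  simp [tN, i.2]

def STsum (m : ℕ) (t : Fin m → ℕ) (P k : ℕ) : ℕ := ∑ j ∈ Finset.range k, (tN m t j + 3*P + 2)

lemma STsum_succ (m : ℕ) (t : Fin m → ℕ) (P k : ℕ) :
    STsum m t P (k+1) = STsum m t P k + tN m t k + 3*P + 2 := by
  simp [STsum, Finset.sum_range_succ]; ring

def st1 (m : ℕ) (t : Fin m → ℕ) (P : ℕ) (α β : Fin m ≃ Fin m) : Fin (3*m) → ℕ := fun j =>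
  if h : (j:ℕ) < m then STsum m t P (α.symm ⟨j, h⟩)
  else if h2 : (j:ℕ) < 2*m then
    STsum m t P (β.symm ⟨(j:ℕ)-m, by omega⟩) + 1 + t (β.symm ⟨(j:ℕ)-m, by omega⟩) + 3*P
  else STsum m t P ((j:ℕ)-2*m) + 1

def st2 (m : ℕ) (sX t : Fin m → ℕ) (P : ℕ) (α β : Fin m ≃ Fin m) : Fin (3*m) → ℕ := fun j =>
  if h : (j:ℕ) < m then STsum m t P (α.symm ⟨j, h⟩) + 1
  else if h2 : (j:ℕ) < 2*m then
    STsum m t P (β.symm ⟨(j:ℕ)-m, by omega⟩) + 1 + sX (α (β.symm ⟨(j:ℕ)-m, by omega⟩)) + P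
  else STsum m t P ((j:ℕ)-2*m) + 1 + t ⟨(j:ℕ)-2*m, by have := j.2; omega⟩ + 3*P

section eval
variable (m : ℕ) (sX sY t : Fin m → ℕ) (P : ℕ) (α β : Fin m ≃ Fin m) (i : Fin m)

@[simp] lemma st1_xjob : st1 m t P α β (xjob i) = STsum m t P (α.symm i) := by
  simp [st1, xjob, i.2]

@[simp] lemma st1_yjob :
    st1 m t P α β (yjob i) = STsum m t P (β.symm i) + 1 + t (β.symm i) + 3*P := by
  have := i.2
  simp only [st1, yjob, dif_neg (by omega : ¬ (m + (i:ℕ) < m)),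
    dif_pos (by omega : m + (i:ℕ) < 2*m), Nat.add_sub_cancel_left, Fin.eta]

@[simp] lemma st1_tjob : st1 m t P α β (tjob i) = STsum m t P i + 1 := by
  have := i.2
  simp only [st1, tjob, dif_neg (by omega : ¬ (2*m + (i:ℕ) < m)),
    dif_neg (by omega : ¬ (2*m + (i:ℕ) < 2*m)), Nat.add_sub_cancel_left]

@[simp] lemma st2_xjob : st2 m sX t P α β (xjob i) = STsum m t P (α.symm i) + 1 := by
  simp [st2, xjob, i.2]

@[simp] lemma st2_yjob :
    st2 m sX t P α β (yjob i) = STsum m t P (β.symm i) + 1 + sX (α (β.symm i)) + P := by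
  have := i.2
  simp only [st2, yjob, dif_neg (by omega : ¬ (m + (i:ℕ) < m)),
    dif_pos (by omega : m + (i:ℕ) < 2*m), Nat.add_sub_cancel_left, Fin.eta]

@[simp] lemma st2_tjob :
    st2 m sX t P α β (tjob i) = STsum m t P i + 1 + t i + 3*P := by
  have := i.2
  simp only [st2, tjob, dif_neg (by omega : ¬ (2*m + (i:ℕ) < m)),
    dif_neg (by omega : ¬ (2*m + (i:ℕ) < 2*m)), Nat.add_sub_cancel_left, Fin.eta]

@[simp] lemma jsA_xjob : jsA m t P (xjob i) = 1 := by
  have := i.2; simp only [jsA]; exact dif_pos (show (i:ℕ) < 2*m by omega)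

@[simp] lemma jsA_yjob : jsA m t P (yjob i) = 1 := by
  have := i.2; simp only [jsA]; exact dif_pos (show m + (i:ℕ) < 2*m by omega)

@[simp] lemma jsA_tjob : jsA m t P (tjob i) = t i + 3*P := by
  have := i.2
  simp only [jsA, tjob, dif_neg (by omega : ¬ (2*m + (i:ℕ) < 2*m)),
    Nat.add_sub_cancel_left, Fin.eta]

@[simp] lemma jsB_xjob : jsB m sX sY P (xjob i) = sX i + P := by
  simp [jsB, xjob, i.2]

@[simp] lemma jsB_yjob : jsB m sX sY P (yjob i) = sY i + 2*P := by
  have := i.2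
  simp only [jsB, yjob, dif_neg (by omega : ¬ (m + (i:ℕ) < m)),
    dif_pos (by omega : m + (i:ℕ) < 2*m), Nat.add_sub_cancel_left, Fin.eta]

@[simp] lemma jsB_tjob : jsB m sX sY P (tjob i) = 2 := by
  have := i.2
  simp only [jsB, tjob, dif_neg (by omega : ¬ (2*m + (i:ℕ) < m)),
    dif_neg (by omega : ¬ (2*m + (i:ℕ) < 2*m))]
  exact (dif_neg (show ¬ (2*m + (i:ℕ) < m) by omega)).trans
    (dif_neg (show ¬ (2*m + (i:ℕ) < 2*m) by omega))

end eval

section feval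
variable (m : ℕ) (α β : Fin m ≃ Fin m) (k : ℕ) (hk : k < m)

lemma f1_0 (h : 3*k < 3*m) : f1 m α β ⟨3*k, h⟩ = xjob (α ⟨k, by omega⟩) := by
  simp only [f1, Nat.mul_mod_right]
  norm_num [Nat.mul_div_cancel_left]

lemma f1_1 (h : 3*k+1 < 3*m) : f1 m α β ⟨3*k+1, h⟩ = tjob (⟨k, by omega⟩ : Fin m) := by
  simp only [f1, show (3*k+1) % 3 = 1 from by omega, show (3*k+1) / 3 = k from by omega]
  norm_num

lemma f1_2 (h : 3*k+2 < 3*m) : f1 m α β ⟨3*k+2, h⟩ = yjob (β ⟨k, by omega⟩) := by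
  simp only [f1, show (3*k+2) % 3 = 2 from by omega, show (3*k+2) / 3 = k from by omega]
  norm_num

lemma f2_0 (h : 3*k < 3*m) : f2 m α β ⟨3*k, h⟩ = xjob (α ⟨k, by omega⟩) := by
  simp only [f2, Nat.mul_mod_right]
  norm_num [Nat.mul_div_cancel_left]

lemma f2_1 (h : 3*k+1 < 3*m) : f2 m α β ⟨3*k+1, h⟩ = yjob (β ⟨k, by omega⟩) := by
  simp only [f2, show (3*k+1) % 3 = 1 from by omega, show (3*k+1) / 3 = k from by omega]
  norm_num

lemma f2_2 (h : 3*k+2 < 3*m) : f2 m α β ⟨3*k+2, h⟩ = tjob (⟨k, by omega⟩ : Fin m) := by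
  simp only [f2, show (3*k+2) % 3 = 2 from by omega, show (3*k+2) / 3 = k from by omega]
  norm_num

end feval

lemma step1 (m : ℕ) (t : Fin m → ℕ) (P : ℕ) (α β : Fin m ≃ Fin m)
    (p : ℕ) (h : p + 1 < 3*m) :
    st1 m t P α β (f1 m α β ⟨p+1, h⟩)
      = st1 m t P α β (f1 m α β ⟨p, by omega⟩) + jsA m t P (f1 m α β ⟨p, by omega⟩) := by
  have h3 : (p:ℕ) % 3 = 0 ∨ (p:ℕ) % 3 = 1 ∨ (p:ℕ) % 3 = 2 := by omega
  rcases h3 with hr | hr | hr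
  · obtain ⟨k, hk, hp⟩ : ∃ k, k < m ∧ p = 3*k := ⟨p/3, by omega, by omega⟩
    rw [show (⟨p+1, h⟩ : Fin (3*m)) = ⟨3*k+1, by omega⟩ from Fin.ext (show p+1 = 3*k+1 by omega),
      show (⟨p, by omega⟩ : Fin (3*m)) = ⟨3*k, by omega⟩ from Fin.ext hp,
      f1_1 m α β k (by omega), f1_0 m α β k (by omega)]
    simp
  · obtain ⟨k, hk, hp⟩ : ∃ k, k < m ∧ p = 3*k+1 := ⟨p/3, by omega, by omega⟩
    have hp2 : p + 1 = 3*k+2 := by omega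
    rw [show (⟨p+1, h⟩ : Fin (3*m)) = ⟨3*k+2, by omega⟩ from Fin.ext hp2,
      show (⟨p, by omega⟩ : Fin (3*m)) = ⟨3*k+1, by omega⟩ from Fin.ext hp,
      f1_2 m α β k (by omega), f1_1 m α β k (by omega)]
    simp only [st1_yjob, st1_tjob, jsA_tjob, Equiv.symm_apply_apply]
    omega
  · obtain ⟨k, hk, hp⟩ : ∃ k, k < m ∧ p = 3*k+2 := ⟨p/3, by omega, by omega⟩
    have hp2 : p + 1 = 3*(k+1) := by omega
    have hk1 : k + 1 < m := by omega
    rw [show (⟨p+1, h⟩ : Fin (3*m)) = ⟨3*(k+1), by omega⟩ from Fin.ext hp2,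
      show (⟨p, by omega⟩ : Fin (3*m)) = ⟨3*k+2, by omega⟩ from Fin.ext hp,
      f1_0 m α β (k+1) (by omega), f1_2 m α β k (by omega)]
    simp only [st1_xjob, st1_yjob, jsA_yjob, Equiv.symm_apply_apply]
    rw [STsum_succ, show tN m t k = t ⟨k, by omega⟩ from by simp [tN, hk]]
    omega

lemma step2 (m : ℕ) (sX sY t : Fin m → ℕ) (P : ℕ) (α β : Fin m ≃ Fin m)
    (hmatch : ∀ i, sX (α i) + sY (β i) = t i)
    (p : ℕ) (h : p + 1 < 3*m) :
    st2 m sX t P α β (f2 m α β ⟨p+1, h⟩)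
      = st2 m sX t P α β (f2 m α β ⟨p, by omega⟩) + jsB m sX sY P (f2 m α β ⟨p, by omega⟩) := by
  have h3 : (p:ℕ) % 3 = 0 ∨ (p:ℕ) % 3 = 1 ∨ (p:ℕ) % 3 = 2 := by omega
  rcases h3 with hr | hr | hr
  · obtain ⟨k, hk, hp⟩ : ∃ k, k < m ∧ p = 3*k := ⟨p/3, by omega, by omega⟩
    rw [show (⟨p+1, h⟩ : Fin (3*m)) = ⟨3*k+1, by omega⟩ from Fin.ext (show p+1 = 3*k+1 by omega),
      show (⟨p, by omega⟩ : Fin (3*m)) = ⟨3*k, by omega⟩ from Fin.ext hp,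
      f2_1 m α β k (by omega), f2_0 m α β k (by omega)]
    simp only [st2_xjob, st2_yjob, jsB_xjob, Equiv.symm_apply_apply]
    omega
  · obtain ⟨k, hk, hp⟩ : ∃ k, k < m ∧ p = 3*k+1 := ⟨p/3, by omega, by omega⟩
    have hp2 : p + 1 = 3*k+2 := by omega
    rw [show (⟨p+1, h⟩ : Fin (3*m)) = ⟨3*k+2, by omega⟩ from Fin.ext hp2,
      show (⟨p, by omega⟩ : Fin (3*m)) = ⟨3*k+1, by omega⟩ from Fin.ext hp,
      f2_2 m α β k (by omega), f2_1 m α β k (by omega)]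
    simp only [st2_tjob, st2_yjob, jsB_yjob, Equiv.symm_apply_apply]
    have := hmatch ⟨k, hk⟩
    omega
  · obtain ⟨k, hk, hp⟩ : ∃ k, k < m ∧ p = 3*k+2 := ⟨p/3, by omega, by omega⟩
    have hp2 : p + 1 = 3*(k+1) := by omega
    have hk1 : k + 1 < m := by omega
    rw [show (⟨p+1, h⟩ : Fin (3*m)) = ⟨3*(k+1), by omega⟩ from Fin.ext hp2,
      show (⟨p, by omega⟩ : Fin (3*m)) = ⟨3*k+2, by omega⟩ from Fin.ext hp,
      f2_0 m α β (k+1) (by omega), f2_2 m α β k (by omega)]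
    simp only [st2_xjob, st2_tjob, jsB_tjob, Equiv.symm_apply_apply]
    rw [STsum_succ, show tN m t k = t ⟨k, by omega⟩ from by simp [tN, hk]]
    omega

/-- if the NMTS instance `(sX, sY, t)` has a solution, the constructed
two-machine job shop instance has a feasible no-idle/no-wait schedule with makespan
exactly `L + 1`. -/
theorem stmt_15 (m : ℕ) (hm : 1 ≤ m) (sX sY t : Fin m → ℕ)
    (hsX : ∀ i, 0 < sX i) (hsY : ∀ i, 0 < sY i) (ht : ∀ i, 0 < t i)
    (hsum : ∑ i, t i = ∑ i, sX i + ∑ i, sY i)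
    (P L : ℕ) (hP : P = ∑ i, t i + ∑ i, sX i + ∑ i, sY i)
    (hL : L = 2 * m + 3 * m * P + ∑ i, t i)
    (α β : Fin m ≃ Fin m) (hmatch : ∀ i, sX (α i) + sY (β i) = t i) :
    ∃ (π1 π2 : Fin (3 * m) ≃ Fin (3 * m)) (s1 s2 : ℕ),
      JSSchedule (3 * m) (jsA m t P) (jsB m sX sY P) (jsRoute m) π1 π2 s1 s2 ∧
      max (s1 + ∑ j, jsA m t P j) (s2 + ∑ j, jsB m sX sY P j) = L + 1 := by
  have h0A : ∀ h : 0 < 3*m, st1 m t P α β (perm1 m α β ⟨0, h⟩) = 0 := by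
    intro h
    rw [perm1_apply, show (⟨0, h⟩ : Fin (3*m)) = ⟨3*0, by omega⟩ from Fin.ext rfl,
      f1_0 m α β 0 (by omega)]
    simp [STsum]
  have h0B : ∀ h : 0 < 3*m, st2 m sX t P α β (perm2 m α β ⟨0, h⟩) = 1 := by
    intro h
    rw [perm2_apply, show (⟨0, h⟩ : Fin (3*m)) = ⟨3*0, by omega⟩ from Fin.ext rfl,
      f2_0 m α β 0 (by omega)]
    simp [STsum]
  have e1 : ∀ j, startTime (3*m) (jsA m t P) (perm1 m α β) 0 j = st1 m t P α β j :=
    startTime_eq (jsA m t P) (perm1 m α β) 0 (st1 m t P α β) h0A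
      (fun p h => step1 m t P α β p h)
  have e2 : ∀ j, startTime (3*m) (jsB m sX sY P) (perm2 m α β) 1 j = st2 m sX t P α β j :=
    startTime_eq (jsB m sX sY P) (perm2 m α β) 1 (st2 m sX t P α β) h0B
      (fun p h => step2 m sX sY t P α β hmatch p h)
  refine ⟨perm1 m α β, perm2 m α β, 0, 1, ?_, ?_⟩
  · intro j
    have hj := j.2
    by_cases h1 : (j:ℕ) < m
    · have hroute : jsRoute m j = true := by simp only [jsRoute]; simp; omega
      rw [hroute, if_pos rfl, e1 j, e2 j,
        show j = xjob ⟨(j:ℕ), h1⟩ from Fin.ext rfl]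
      simp
    · by_cases h2 : (j:ℕ) < 2*m
      · have hroute : jsRoute m j = false := by simp only [jsRoute]; simp; omega
        rw [hroute, if_neg (by simp), e1 j, e2 j,
          show j = yjob ⟨(j:ℕ) - m, by omega⟩ from Fin.ext (by simp [yjob]; omega)]
        simp only [st1_yjob, st2_yjob, jsB_yjob]
        have h5 := hmatch (β.symm ⟨(j:ℕ) - m, by omega⟩)
        rw [Equiv.apply_symm_apply] at h5
        omega
      · have hroute : jsRoute m j = true := by simp only [jsRoute]; simp; omega
        rw [hroute, if_pos rfl, e1 j, e2 j,
          show j = tjob ⟨(j:ℕ) - 2*m, by omega⟩ from Fin.ext (by simp [tjob]; omega)]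
        simp only [st1_tjob, st2_tjob, jsA_tjob]
        omega
  · have h3m : m + (m + m) = 3*m := by ring
    have c1 : ∀ i : Fin m, (finCongr h3m) (Fin.castAdd (m+m) i) = xjob i := by
      intro i; apply Fin.ext; simp [xjob]
    have c2 : ∀ i : Fin m, (finCongr h3m) (Fin.natAdd m (Fin.castAdd m i)) = yjob i := by
      intro i; apply Fin.ext; simp [yjob]
    have c3 : ∀ i : Fin m, (finCongr h3m) (Fin.natAdd m (Fin.natAdd m i)) = tjob i := by
      intro i; apply Fin.ext; simp [tjob]; omega
    have hsA : ∑ j, jsA m t P j = L := by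
      rw [← Equiv.sum_comp (finCongr h3m) (jsA m t P), Fin.sum_univ_add, Fin.sum_univ_add]
      simp only [c1, c2, c3, jsA_xjob, jsA_yjob, jsA_tjob]
      simp [Finset.sum_add_distrib, Finset.sum_const, Finset.card_univ, mul_comm]
      rw [hL]; ring
    have hsB : ∑ j, jsB m sX sY P j = L := by
      rw [← Equiv.sum_comp (finCongr h3m) (jsB m sX sY P), Fin.sum_univ_add, Fin.sum_univ_add]
      simp only [c1, c2, c3, jsB_xjob, jsB_yjob, jsB_tjob]
      simp [Finset.sum_add_distrib, Finset.sum_const, Finset.card_univ, mul_comm]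
      rw [hL, hsum]; ring
    rw [hsA, hsB]
    omega
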